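/- For the (3,-2) reduction of the plus-KdV equation with v₅ = v₀/(v₀v₂ + v₀v₃ - 1), the function J₃ = (v₁v₄-1)(v₀v₃-1)/(v₀v₁v₂v₃v₄) satisfies J₃(v₁,...,v₅) = -J₃(v₀,...,v₄). Consequently J₂/J₃ and J₂J₃ (with J₂ = (v₂v₄-1)(v₁v₃-1)(v₀v₂-1)/(v₀v₁v₂v₃v₄)) are genuine integrals of the map. -/

import Mathlib

/-- J₃ is a 2-integral (anti-integral) of the (3,-2) plus-KdV reduction;
consequently J₂/J₃ and J₂·J₃ are integrals. -/
theorem plus_kdv_J3_anti_integral (v0 v1 v2 v3 v4 : ℝ)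
    (h0 : v0 ≠ 0) (h1 : v1 ≠ 0) (h2 : v2 ≠ 0) (h3 : v3 ≠ 0) (h4 : v4 ≠ 0)
    (hden : v0 * v2 + v0 * v3 - 1 ≠ 0)
    (v5 : ℝ) (hv5 : v5 = v0 / (v0 * v2 + v0 * v3 - 1)) :
    ((v2 * v5 - 1) * (v1 * v4 - 1) / (v1 * v2 * v3 * v4 * v5)
        = -((v1 * v4 - 1) * (v0 * v3 - 1) / (v0 * v1 * v2 * v3 * v4)))
    ∧ (((v3 * v5 - 1) * (v2 * v4 - 1) * (v1 * v3 - 1) / (v1 * v2 * v3 * v4 * v5)) /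
          ((v2 * v5 - 1) * (v1 * v4 - 1) / (v1 * v2 * v3 * v4 * v5))
        = ((v2 * v4 - 1) * (v1 * v3 - 1) * (v0 * v2 - 1) / (v0 * v1 * v2 * v3 * v4)) /
          ((v1 * v4 - 1) * (v0 * v3 - 1) / (v0 * v1 * v2 * v3 * v4)))
    ∧ (((v3 * v5 - 1) * (v2 * v4 - 1) * (v1 * v3 - 1) / (v1 * v2 * v3 * v4 * v5)) *
          ((v2 * v5 - 1) * (v1 * v4 - 1) / (v1 * v2 * v3 * v4 * v5))
        = ((v2 * v4 - 1) * (v1 * v3 - 1) * (v0 * v2 - 1) / (v0 * v1 * v2 * v3 * v4)) *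
          ((v1 * v4 - 1) * (v0 * v3 - 1) / (v0 * v1 * v2 * v3 * v4))) := by
  subst hv5
  have hB : (v2 * (v0 / (v0 * v2 + v0 * v3 - 1)) - 1) * (v1 * v4 - 1) /
      (v1 * v2 * v3 * v4 * (v0 / (v0 * v2 + v0 * v3 - 1)))
      = -((v1 * v4 - 1) * (v0 * v3 - 1) / (v0 * v1 * v2 * v3 * v4)) := by
    have hden' : v0 * (v2 + v3) - 1 ≠ 0 := by rw [mul_add]; exact hden
    field_simp
    ring
  have hA : (v3 * (v0 / (v0 * v2 + v0 * v3 - 1)) - 1) * (v2 * v4 - 1) * (v1 * v3 - 1) /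
      (v1 * v2 * v3 * v4 * (v0 / (v0 * v2 + v0 * v3 - 1)))
      = -((v2 * v4 - 1) * (v1 * v3 - 1) * (v0 * v2 - 1) / (v0 * v1 * v2 * v3 * v4)) := by
    have hden' : v0 * (v2 + v3) - 1 ≠ 0 := by rw [mul_add]; exact hden
    field_simp
    ring
  exact ⟨hB, by rw [hA, hB, neg_div_neg_eq], by rw [hA, hB]; ring⟩
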